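/- For every real θ ≥ 1 and every k ∈ ℕ with k ≥ 1, ∫₀^π (1 - cos(θ t))^k sin t dt ≥ 2^{k+1}/(k+1). -/

import Mathlib

open intervalIntegral Real



lemma expand_aux (k : ℕ) (y : ℝ) :
    (1 - Real.cos y) ^ k =
      ∑ j ∈ Finset.range (2*k+1),
        ((-1:ℝ)^(k+j) * (Nat.choose (2*k) j : ℝ) / 2^k) * Real.cos (((j:ℝ) - k) * y) := by
  set z := Complex.exp (y * Complex.I) with hzdef
  have hz : z ≠ 0 := Complex.exp_ne_zero _
  have hcos : ((Real.cos y : ℝ) : ℂ) = (z + z⁻¹)/2 := by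
    rw [Complex.ofReal_cos, Complex.cos, hzdef, ← Complex.exp_neg]
    ring_nf
  have e1 : ((1 - Real.cos y : ℝ) : ℂ) * (2*z) = -(1-z)^2 := by
    rw [Complex.ofReal_sub, Complex.ofReal_one, hcos]
    field_simp
    ring
  have e2 : ((1 - Real.cos y : ℝ) : ℂ)^k * (2*z)^k = (-1)^k * (1-z)^(2*k) := by
    rw [← mul_pow, e1, show -((1:ℂ)-z)^2 = (-1) * (1-z)^2 by ring, mul_pow, ← pow_mul]
  have e3 : ((1:ℂ) - z)^(2*k) = ∑ j ∈ Finset.range (2*k+1), (-z)^j * (Nat.choose (2*k) j : ℂ) := by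
    rw [sub_eq_add_neg, add_comm, add_pow]
    simp
  have keyC : ((1 - Real.cos y : ℝ) : ℂ)^k
      = ∑ j ∈ Finset.range (2*k+1),
          (((-1:ℝ)^(k+j) * (Nat.choose (2*k) j : ℝ) / 2^k : ℝ) : ℂ)
            * Complex.exp (((((j:ℝ) - k)*y : ℝ)) * Complex.I) := by
    have hpow : ((2:ℂ)*z)^k ≠ 0 := pow_ne_zero _ (mul_ne_zero two_ne_zero hz)
    apply mul_right_cancel₀ hpow
    rw [e2, e3, Finset.sum_mul, Finset.mul_sum]
    apply Finset.sum_congr rfl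
    intro j hj
    have hzk : z^k = Complex.exp (((k:ℝ) * y : ℝ) * Complex.I) := by
      rw [hzdef, ← Complex.exp_nat_mul]
      push_cast
      ring_nf
    have hzj : z^j = Complex.exp (((j:ℝ) * y : ℝ) * Complex.I) := by
      rw [hzdef, ← Complex.exp_nat_mul]
      push_cast
      ring_nf
    have hmul : Complex.exp (((((j:ℝ)-k)*y : ℝ)) * Complex.I) * z^k = z^j := by
      rw [hzk, hzj, ← Complex.exp_add]
      congr 1
      push_cast
      ring
    have h2k : ((2:ℂ))^k ≠ 0 := pow_ne_zero _ two_ne_zero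
    rw [mul_pow, show ((-z))^j = (-1)^j * z^j by rw [neg_pow, mul_comm], ← hmul]
    push_cast
    field_simp
    ring
  have := congrArg Complex.re keyC
  rw [← Complex.ofReal_pow, Complex.ofReal_re, Complex.re_sum] at this
  rw [this]
  apply Finset.sum_congr rfl
  intro j hj
  rw [Complex.re_ofReal_mul, Complex.exp_ofReal_mul_I_re]



lemma integral_sin_mul' (b : ℝ) (hb : b ≠ 0) :
    ∫ t in (0:ℝ)..π, Real.sin (b * t) = (1 - Real.cos (b * π)) / b := by
  have h : ∀ t ∈ Set.uIcc (0:ℝ) π, HasDerivAt (fun u => -(Real.cos (b*u))/b) (Real.sin (b*t)) t := by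
    intro t _
    have h1 : HasDerivAt (fun u : ℝ => b*u) b t := by
      simpa using (hasDerivAt_id t).const_mul b
    have h2 : HasDerivAt (fun u => Real.cos (b*u)) (-Real.sin (b*t) * b) t :=
      (Real.hasDerivAt_cos (b*t)).comp t h1
    have h3 := (h2.neg).div_const b
    refine h3.congr_deriv ?_
    field_simp
  rw [intervalIntegral.integral_eq_sub_of_hasDerivAt h
    ((Real.continuous_sin.comp (continuous_const.mul continuous_id)).intervalIntegrable 0 π)]
  simp
  field_simp
  ring

lemma sin_mul_integrable (b : ℝ) : IntervalIntegrable (fun t => Real.sin (b*t)) MeasureTheory.volume 0 π := by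
  apply Continuous.intervalIntegrable
  fun_prop

lemma cos_mul_sin_eq (a t : ℝ) :
    Real.cos (a*t) * Real.sin t = (Real.sin ((a+1)*t) - Real.sin ((a-1)*t))/2 := by
  rw [show (a+1)*t = a*t + t by ring, show (a-1)*t = a*t - t by ring,
    Real.sin_add, Real.sin_sub]
  ring

noncomputable def cInt (a : ℝ) : ℝ := ∫ t in (0:ℝ)..π, Real.cos (a*t) * Real.sin t

lemma cInt_integrable (a : ℝ) : IntervalIntegrable (fun t => Real.cos (a*t) * Real.sin t) MeasureTheory.volume 0 π := by
  apply Continuous.intervalIntegrable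
  fun_prop

lemma cInt_eval (a : ℝ) (ha : 1 < a) :
    cInt a = -(1 + Real.cos (a*π))/(a^2-1) := by
  have h1 : a + 1 ≠ 0 := by nlinarith
  have h2 : a - 1 ≠ 0 := by nlinarith
  have h3 : a^2 - 1 ≠ 0 := by nlinarith
  unfold cInt
  simp_rw [cos_mul_sin_eq]
  rw [intervalIntegral.integral_div, intervalIntegral.integral_sub
    (sin_mul_integrable (a+1)) (sin_mul_integrable (a-1)),
    integral_sin_mul' _ h1, integral_sin_mul' _ h2,
    show (a+1)*π = a*π + π by ring, show (a-1)*π = a*π - π by ring,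
    Real.cos_add_pi, Real.cos_sub_pi]
  field_simp
  ring

lemma cInt_one : cInt 1 = 0 := by
  unfold cInt
  simp_rw [cos_mul_sin_eq, show (1:ℝ)+1 = 2 by norm_num, show (1:ℝ)-1 = 0 by norm_num,
    zero_mul, Real.sin_zero, sub_zero]
  rw [intervalIntegral.integral_div, integral_sin_mul' 2 two_ne_zero, Real.cos_two_pi]
  norm_num

lemma cInt_zero : cInt 0 = 2 := by
  unfold cInt
  simp [Real.cos_pi]
  norm_num

lemma cInt_neg (a : ℝ) : cInt (-a) = cInt a := by
  unfold cInt
  simp_rw [neg_mul, Real.cos_neg]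

lemma cInt_nonpos (a : ℝ) (ha : 1 ≤ a) : cInt a ≤ 0 := by
  rcases eq_or_lt_of_le ha with h | h
  · rw [← h, cInt_one]
  · rw [cInt_eval a h]
    have h1 : 0 ≤ 1 + Real.cos (a*π) := by nlinarith [Real.neg_one_le_cos (a*π)]
    have h2 : 0 < a^2 - 1 := by nlinarith
    have := div_nonneg h1 h2.le
    linarith [div_nonneg h1 h2.le, neg_div (a^2-1) (1 + Real.cos (a*π))]


lemma cInt_def (a : ℝ) : cInt a = ∫ t in (0:ℝ)..π, Real.cos (a*t) * Real.sin t := rfl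



lemma cos_nat_mul_pi (m : ℕ) : Real.cos ((m:ℝ) * π) = (-1:ℝ)^m := by
  induction m with
  | zero => simp
  | succ n ih =>
    push_cast
    rw [add_mul, one_mul, Real.cos_add_pi, ih, pow_succ]
    ring

lemma key_term (m : ℕ) (hm : 1 ≤ m) (θ : ℝ) (hθ : 1 ≤ θ) :
    0 ≤ (-1:ℝ)^m * (cInt ((m:ℝ)*θ) - cInt (m:ℝ)) := by
  have hmθ : 1 ≤ (m:ℝ)*θ := by
    have : (1:ℝ) ≤ (m:ℝ) := by exact_mod_cast hm
    nlinarith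
  rcases Nat.even_or_odd m with he | ho
  · -- m even, m ≥ 2
    have hm2 : 2 ≤ m := by
      rcases he with ⟨r, hr⟩
      omega
    have hm2' : (2:ℝ) ≤ (m:ℝ) := by exact_mod_cast hm2
    have hmgt : (1:ℝ) < (m:ℝ) := by linarith
    have hmθgt : (1:ℝ) < (m:ℝ)*θ := by nlinarith
    rw [he.neg_one_pow, one_mul, cInt_eval _ hmgt, cInt_eval _ hmθgt, _root_.cos_nat_mul_pi,
      he.neg_one_pow]
    have hd1 : (0:ℝ) < (m:ℝ)^2 - 1 := by nlinarith
    have hd2 : (0:ℝ) < ((m:ℝ)*θ)^2 - 1 := by nlinarith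
    have hd3 : (m:ℝ)^2 - 1 ≤ ((m:ℝ)*θ)^2 - 1 := by
      have h9 : (0:ℝ) ≤ (m:ℝ)^2*(θ^2-1) := mul_nonneg (sq_nonneg _) (by nlinarith)
      nlinarith
    have hc1 : 1 + Real.cos ((m:ℝ)*θ*π) ≤ 2 := by nlinarith [Real.cos_le_one ((m:ℝ)*θ*π)]
    have hc0 : 0 ≤ 1 + Real.cos ((m:ℝ)*θ*π) := by nlinarith [Real.neg_one_le_cos ((m:ℝ)*θ*π)]
    rw [sub_nonneg, div_le_div_iff₀ hd1 hd2]
    nlinarith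
  · -- m odd : cInt m = 0, cInt (mθ) ≤ 0
    have h0 : cInt (m:ℝ) = 0 := by
      rcases eq_or_lt_of_le hm with h | h
      · rw [show ((m:ℝ)) = 1 by exact_mod_cast h.symm, cInt_one]
      · have : (1:ℝ) < (m:ℝ) := by exact_mod_cast h
        rw [cInt_eval _ this, _root_.cos_nat_mul_pi, ho.neg_one_pow]
        norm_num
    rw [ho.neg_one_pow, h0, sub_zero]
    nlinarith [cInt_nonpos _ hmθ]




/-- For every real `θ ≥ 1` and every `k ∈ ℕ`, `k ≥ 1`:
`∫₀^π (1 - cos(θ t))^k sin t dt ≥ 2^{k+1}/(k+1)`. -/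
theorem integral_one_sub_cos_pow_mul_sin_ge (θ : ℝ) (hθ : 1 ≤ θ) (k : ℕ) (hk : 1 ≤ k) :
    (2 : ℝ) ^ (k + 1) / (k + 1) ≤ ∫ t in (0 : ℝ)..π, (1 - Real.cos (θ * t)) ^ k * Real.sin t := by
  -- expansion of the integral for any ϑ
  have expand : ∀ ϑ : ℝ,
      (∫ t in (0:ℝ)..π, (1 - Real.cos (ϑ*t)) ^ k * Real.sin t)
        = ∑ j ∈ Finset.range (2*k+1),
            ((-1:ℝ)^(k+j) * (Nat.choose (2*k) j : ℝ) / 2^k) * cInt (((j:ℝ) - k) * ϑ) := by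
    intro ϑ
    have hpt : ∀ t : ℝ, (1 - Real.cos (ϑ*t)) ^ k * Real.sin t
        = ∑ j ∈ Finset.range (2*k+1),
            ((-1:ℝ)^(k+j) * (Nat.choose (2*k) j : ℝ) / 2^k)
              * (Real.cos ((((j:ℝ) - k) * ϑ) * t) * Real.sin t) := by
      intro t
      rw [expand_aux k (ϑ*t), Finset.sum_mul]
      apply Finset.sum_congr rfl
      intro j hj
      rw [mul_assoc, mul_assoc]
    simp_rw [hpt]
    rw [intervalIntegral.integral_finset_sum (μ := MeasureTheory.volume) (a := (0:ℝ)) (b := π)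
      (s := Finset.range (2*k+1))
      (f := fun j t => ((-1:ℝ)^(k+j) * (Nat.choose (2*k) j : ℝ) / 2^k)
        * (Real.cos ((((j:ℝ) - k) * ϑ) * t) * Real.sin t))
      (fun j _ => (cInt_integrable (((j:ℝ) - k) * ϑ)).const_mul _)]
    apply Finset.sum_congr rfl
    intro j hj
    rw [intervalIntegral.integral_const_mul, cInt_def]
  -- value at ϑ = 1
  have I1 : (∫ t in (0:ℝ)..π, (1 - Real.cos ((1:ℝ)*t)) ^ k * Real.sin t)
      = 2^(k+1)/(k+1) := by
    have hder : ∀ t ∈ Set.uIcc (0:ℝ) π,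
        HasDerivAt (fun u => (1 - Real.cos u)^(k+1) / (k+1))
          ((1 - Real.cos ((1:ℝ)*t)) ^ k * Real.sin t) t := by
      intro t _
      have h1 : HasDerivAt (fun u : ℝ => 1 - Real.cos u) (Real.sin t) t := by
        simpa using (Real.hasDerivAt_cos t).const_sub 1
      have h2 := (h1.pow (k+1)).div_const ((k:ℝ)+1)
      refine h2.congr_deriv ?_
      have hk1 : ((k:ℝ)+1) ≠ 0 := by positivity
      rw [Nat.add_sub_cancel]
      push_cast
      field_simp
    rw [intervalIntegral.integral_eq_sub_of_hasDerivAt hder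
      (by apply Continuous.intervalIntegrable; fun_prop)]
    rw [Real.cos_pi, Real.cos_zero]
    norm_num
  -- termwise comparison
  rw [← I1, expand 1, expand θ]
  apply Finset.sum_le_sum
  intro j hj
  rcases lt_trichotomy j k with h | h | h
  · -- j < k, m = k - j
    set m := k - j with hm
    have hm1 : 1 ≤ m := by omega
    have hd : ((j:ℝ) - k) = -(m:ℝ) := by
      push_cast [hm]
      have : (j:ℝ) ≤ (k:ℝ) := by exact_mod_cast h.le
      push_cast [Nat.cast_sub h.le]
      ring
    have hsign : ((-1:ℝ))^(k+j) = (-1:ℝ)^m := by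
      have : k + j = m + 2*j := by omega
      rw [this, pow_add, pow_mul]
      norm_num
    rw [hd, hsign, neg_mul, neg_mul, cInt_neg, cInt_neg, mul_one]
    have hchoose : (0:ℝ) ≤ (Nat.choose (2*k) j : ℝ) / 2^k := by positivity
    have h9 : 0 ≤ ((Nat.choose (2*k) j : ℝ) / 2^k) * ((-1:ℝ)^m * (cInt ((m:ℝ)*θ) - cInt (m:ℝ))) :=
      mul_nonneg hchoose (key_term m hm1 θ hθ)
    have heq : (-1:ℝ)^m * ((2*k).choose j : ℝ) / 2^k * cInt ((m:ℝ)*θ)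
        - (-1:ℝ)^m * ((2*k).choose j : ℝ) / 2^k * cInt (m:ℝ)
        = ((2*k).choose j : ℝ)/2^k * ((-1:ℝ)^m * (cInt ((m:ℝ)*θ) - cInt (m:ℝ))) := by ring
    rw [← sub_nonneg, heq]
    exact h9
  · -- j = k
    subst h
    norm_num
  · -- j > k, m = j - k
    set m := j - k with hm
    have hm1 : 1 ≤ m := by omega
    have hd : ((j:ℝ) - k) = (m:ℝ) := by
      push_cast [hm, Nat.cast_sub h.le]
      ring
    have hsign : ((-1:ℝ))^(k+j) = (-1:ℝ)^m := by
      have : k + j = m + 2*k := by omega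
      rw [this, pow_add, pow_mul]
      norm_num
    rw [hd, hsign, mul_one]
    have hchoose : (0:ℝ) ≤ (Nat.choose (2*k) j : ℝ) / 2^k := by positivity
    have h9 : 0 ≤ ((Nat.choose (2*k) j : ℝ) / 2^k) * ((-1:ℝ)^m * (cInt ((m:ℝ)*θ) - cInt (m:ℝ))) :=
      mul_nonneg hchoose (key_term m hm1 θ hθ)
    have heq : (-1:ℝ)^m * ((2*k).choose j : ℝ) / 2^k * cInt ((m:ℝ)*θ)
        - (-1:ℝ)^m * ((2*k).choose j : ℝ) / 2^k * cInt (m:ℝ)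
        = ((2*k).choose j : ℝ)/2^k * ((-1:ℝ)^m * (cInt ((m:ℝ)*θ) - cInt (m:ℝ))) := by ring
    rw [← sub_nonneg, heq]
    exact h9
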